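/- For any n ∈ ℕ, i ∈ {0,…,n}, j ∈ {0,…,n−i}, the Stirling operators of the first kind satisfy the convolution identity C(i+j, i)·s(n, i+j) = Σ_{k=i}^{n−j} C(n,k) · Sym_{i+j}(s(k,i) ⊗ s(n−k, j)), as operators from symmetric functions on X^n to symmetric functions on X^{i+j}, where (s(k,i) ⊗ s(n−k,j)) applies s(k,i) to the first k variables and s(n−k,j) to the last n−k variables, followed by symmetrization Sym_{i+j}. The same identity holds with s replaced throughout by the Stirling operators of the second kind S. -/

import Mathlib

open Finset

section Defs

variable {X : Type*} [Fintype X] [DecidableEq X]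

/-- The falling factorial measure `(ω)_n` on `X^n`, given by the density
`(ω)_n(y₁,…,y_n) = ω(y₁)(ω(y₂)−δ_{y₁}(y₂))⋯(ω(y_n)−δ_{y₁}(y_n)−⋯−δ_{y_{n−1}}(y_n))`. -/
noncomputable def ff (ω : X → ℝ) : (n : ℕ) → (Fin n → X) → ℝ
  | 0 => fun _ => 1
  | n + 1 => fun y =>
      ff ω n (fun i => y i.castSucc) *
        (ω (y (Fin.last n)) - ∑ i : Fin n, if y i.castSucc = y (Fin.last n) then (1 : ℝ) else 0)

/-- Dirac measure at `x`. -/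
noncomputable def diracMeas (x : X) : X → ℝ := fun a => if a = x then 1 else 0

/-- The measure `δ_{x₁}+⋯+δ_{x_k}` of a multiset `[x₁,…,x_k]`. -/
noncomputable def msMeas {k : ℕ} (x : Fin k → X) : X → ℝ :=
  fun a => ((Finset.univ.filter (fun i => x i = a)).card : ℝ)

/-- Integration `⟨μ, f⟩` of a function against a measure on `X^n`. -/
noncomputable def pairing (n : ℕ) (μ f : (Fin n → X) → ℝ) : ℝ :=
  ∑ y : Fin n → X, μ y * f y

/-- Symmetrization of a function/measure on `X^n`. -/
noncomputable def symmFun (n : ℕ) (μ : (Fin n → X) → ℝ) : (Fin n → X) → ℝ :=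
  fun y => (∑ π : Equiv.Perm (Fin n), μ (y ∘ π)) / n.factorial

/-- Tensor product of measures/functions on `X^k` and `X^m`. -/
noncomputable def tensFun {k m : ℕ} (μ : (Fin k → X) → ℝ) (ν : (Fin m → X) → ℝ) :
    (Fin (k + m) → X) → ℝ :=
  fun y => μ (fun i => y (Fin.castAdd m i)) * ν (fun j => y (Fin.natAdd k j))

/-- Re-indexing along an equality of dimensions. -/
def castFun {m n : ℕ} (h : m = n) (μ : (Fin m → X) → ℝ) : (Fin n → X) → ℝ :=
  fun y => μ (fun i => y (Fin.cast h i))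

/-- The product measure `ω^{⊗n}` (and likewise the tensor power `ξ^{⊗n}` of a function). -/
noncomputable def prodMeas (ω : X → ℝ) (n : ℕ) : (Fin n → X) → ℝ :=
  fun y => ∏ i, ω (y i)

/-- A function on `X^n` is symmetric. -/
def IsSymmFun {n : ℕ} (f : (Fin n → X) → ℝ) : Prop :=
  ∀ (π : Equiv.Perm (Fin n)) (y : Fin n → X), f (y ∘ π) = f y

end Defs

/-- The set of surjections `Fin n → Fin k`; these correspond to set partitions of
`{1,…,n}` into `k` nonempty blocks together with an ordering of the blocks. -/
noncomputable def surjs (n k : ℕ) : Finset (Fin n → Fin k) :=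
  Finset.univ.filter (fun g => Function.Surjective g)

/-- Cardinality of the fiber `g⁻¹(i)` (the size of block `i`). -/
def fiberCard {n k : ℕ} (g : Fin n → Fin k) (i : Fin k) : ℕ :=
  (Finset.univ.filter (fun j => g j = i)).card

section Ops

variable {X : Type*} [Fintype X] [DecidableEq X]

/-- Stirling operator of the second kind `S(n,k) = Σ_{λ ∈ UP(n,k)} D_λ`:
summing the substitute-and-symmetrize operators over unordered partitions of `{1,…,n}`
into `k` nonempty blocks is the same as summing `f(y ∘ g)` over the surjections
`g : Fin n → Fin k` and dividing by `k!`. -/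
noncomputable def Sop (n k : ℕ) (f : (Fin n → X) → ℝ) : (Fin k → X) → ℝ :=
  fun y => (∑ g ∈ surjs n k, f (y ∘ g)) / k.factorial

/-- Unsigned Stirling operator of the first kind
`c(n,k) = Σ_{λ={λ₁,…,λ_k} ∈ UP(n,k)} (|λ₁|−1)!⋯(|λ_k|−1)! · D_λ`. -/
noncomputable def cop (n k : ℕ) (f : (Fin n → X) → ℝ) : (Fin k → X) → ℝ :=
  fun y => (∑ g ∈ surjs n k, (∏ i : Fin k, ((fiberCard g i - 1).factorial : ℝ)) * f (y ∘ g)) /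
    k.factorial

/-- Stirling operator of the first kind `s(n,k) = (−1)^{n−k} c(n,k)`. -/
noncomputable def sop (n k : ℕ) (f : (Fin n → X) → ℝ) : (Fin k → X) → ℝ :=
  fun y => (-1 : ℝ) ^ (n - k) * cop n k f y

/-- Lah operator `L(n,k) = Σ_{λ={λ₁,…,λ_k} ∈ UP(n,k)} |λ₁|!⋯|λ_k|! · D_λ`. -/
noncomputable def Lop (n k : ℕ) (f : (Fin n → X) → ℝ) : (Fin k → X) → ℝ :=
  fun y => (∑ g ∈ surjs n k, (∏ i : Fin k, ((fiberCard g i).factorial : ℝ)) * f (y ∘ g)) /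
    k.factorial

end Ops

/-- `op1 ⊗ op2`: apply `op1` to the first group of variables and `op2` to the last group. -/
def opTens {X : Type*} {k l p q : ℕ}
    (op1 : ((Fin k → X) → ℝ) → ((Fin p → X) → ℝ))
    (op2 : ((Fin l → X) → ℝ) → ((Fin q → X) → ℝ))
    (f : (Fin (k + l) → X) → ℝ) : (Fin (p + q) → X) → ℝ :=
  fun y => op1
    (fun u => op2 (fun v => f (Fin.append u v)) (fun b => y (Fin.natAdd p b)))
    (fun a => y (Fin.castAdd q a))

section AuxConv

open Finset Equiv

/-- Generic weight of a surjection: product of `W` of the fiber sizes. -/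
noncomputable def WtW (W : ℕ → ℝ) {n k : ℕ} (g : Fin n → Fin k) : ℝ :=
  ∏ m : Fin k, W (fiberCard g m)

/-- Generic weighted Stirling-type operator. -/
noncomputable def TopW {X : Type*} [Fintype X] [DecidableEq X] (W : ℕ → ℝ) (n k : ℕ)
    (f : (Fin n → X) → ℝ) : (Fin k → X) → ℝ :=
  fun y => (∑ g ∈ surjs n k, WtW W g * f (y ∘ g)) / k.factorial

/-- The combined surjection built from `π`, `g1`, `g2`. -/
def GG (i j : ℕ) {k m : ℕ} (π : Equiv.Perm (Fin (i + j))) (g1 : Fin k → Fin i)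
    (g2 : Fin m → Fin j) : Fin (k + m) → Fin (i + j) :=
  fun x => π (Fin.append (fun a => Fin.castAdd j (g1 a)) (fun b => Fin.natAdd i (g2 b)) x)

lemma mem_surjs {n k : ℕ} {g : Fin n → Fin k} : g ∈ surjs n k ↔ Function.Surjective g := by
  simp [surjs]

lemma fin_split {k m : ℕ} (x : Fin (k + m)) :
    (∃ a : Fin k, x = Fin.castAdd m a) ∨ ∃ b : Fin m, x = Fin.natAdd k b := by
  rcases lt_or_ge (x : ℕ) k with hx | hx
  · exact Or.inl ⟨⟨x, hx⟩, Fin.ext rfl⟩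
  · have hlt := x.isLt
    exact Or.inr ⟨⟨(x : ℕ) - k, by omega⟩, Fin.ext (by simp only [Fin.coe_natAdd]; omega)⟩

lemma append_val_lt {i j k m : ℕ} (g1 : Fin k → Fin i) (g2 : Fin m → Fin j) (x : Fin (k + m)) :
    ((Fin.append (fun a => Fin.castAdd j (g1 a)) (fun b => Fin.natAdd i (g2 b)) x : Fin (i + j)) : ℕ) < i
      ↔ (x : ℕ) < k := by
  rcases fin_split x with ⟨a, rfl⟩ | ⟨b, rfl⟩
  · simp only [Fin.append_left, Fin.coe_castAdd]
    exact ⟨fun _ => a.isLt, fun _ => (g1 a).isLt⟩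
  · simp only [Fin.append_right, Fin.coe_natAdd]
    constructor <;> intro hh <;> omega

lemma fiberCard_comp_equiv {n n' k : ℕ} (g : Fin n' → Fin k) (e : Fin n ≃ Fin n') (t : Fin k) :
    fiberCard (fun x => g (e x)) t = fiberCard g t := by
  unfold fiberCard
  refine Finset.card_bij (fun x _ => e x) ?_ (fun x _ x' _ hxx => e.injective hxx) ?_
  · intro x hx
    simp only [mem_filter, mem_univ, true_and] at hx ⊢
    exact hx
  · intro z hz
    simp only [mem_filter, mem_univ, true_and] at hz ⊢
    exact ⟨e.symm z, by simpa using hz, by simp⟩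

lemma fiberCard_perm_target {n k : ℕ} (g : Fin n → Fin k) (π : Equiv.Perm (Fin k)) (t : Fin k) :
    fiberCard (fun x => π (g x)) t = fiberCard g (π.symm t) := by
  unfold fiberCard
  congr 1
  ext x
  simp [Equiv.apply_eq_iff_eq_symm_apply]

lemma fiberCard_append_left {i j k m : ℕ} (g1 : Fin k → Fin i) (g2 : Fin m → Fin j) (a : Fin i) :
    fiberCard (Fin.append (fun a => Fin.castAdd j (g1 a)) (fun b => Fin.natAdd i (g2 b)))
        (Fin.castAdd j a) = fiberCard g1 a := by
  unfold fiberCard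
  symm
  refine Finset.card_bij (fun c _ => Fin.castAdd m c) ?_ ?_ ?_
  · intro c hc
    simp only [mem_filter, mem_univ, true_and] at hc ⊢
    rw [Fin.append_left, hc]
  · intro c _ c' _ hcc
    have hcc' : Fin.castAdd m c = Fin.castAdd m c' := hcc
    exact Fin.castAdd_injective _ _ hcc'
  · intro x hx
    simp only [mem_filter, mem_univ, true_and] at hx
    have hvi : ((Fin.append (fun a => Fin.castAdd j (g1 a)) (fun b => Fin.natAdd i (g2 b)) x
        : Fin (i + j)) : ℕ) < i := by rw [hx]; simpa using a.isLt
    have hxk := (append_val_lt g1 g2 x).mp hvi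
    refine ⟨⟨(x : ℕ), hxk⟩, ?_, Fin.ext rfl⟩
    simp only [mem_filter, mem_univ, true_and]
    have hx2 : x = Fin.castAdd m ⟨(x : ℕ), hxk⟩ := Fin.ext rfl
    rw [hx2, Fin.append_left] at hx
    exact Fin.ext (by simpa using congrArg Fin.val hx)

lemma fiberCard_append_right {i j k m : ℕ} (g1 : Fin k → Fin i) (g2 : Fin m → Fin j) (b : Fin j) :
    fiberCard (Fin.append (fun a => Fin.castAdd j (g1 a)) (fun b => Fin.natAdd i (g2 b)))
        (Fin.natAdd i b) = fiberCard g2 b := by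
  unfold fiberCard
  symm
  refine Finset.card_bij (fun c _ => Fin.natAdd k c) ?_ ?_ ?_
  · intro c hc
    simp only [mem_filter, mem_univ, true_and] at hc ⊢
    rw [Fin.append_right, hc]
  · intro c _ c' _ hcc
    have hcc' : Fin.natAdd k c = Fin.natAdd k c' := hcc
    have := congrArg Fin.val hcc'
    simp only [Fin.coe_natAdd] at this
    exact Fin.ext (by omega)
  · intro x hx
    simp only [mem_filter, mem_univ, true_and] at hx
    have hvi : ¬ ((Fin.append (fun a => Fin.castAdd j (g1 a)) (fun b => Fin.natAdd i (g2 b)) x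
        : Fin (i + j)) : ℕ) < i := by rw [hx]; simp [Fin.coe_natAdd]
    have hxk : ¬ (x : ℕ) < k := fun hh => hvi ((append_val_lt g1 g2 x).mpr hh)
    have hlt := x.isLt
    refine ⟨⟨(x : ℕ) - k, by omega⟩, ?_, Fin.ext (by simp only [Fin.coe_natAdd]; omega)⟩
    simp only [mem_filter, mem_univ, true_and]
    have hx2 : x = Fin.natAdd k ⟨(x : ℕ) - k, by omega⟩ :=
      Fin.ext (by simp only [Fin.coe_natAdd]; omega)
    rw [hx2, Fin.append_right] at hx
    have := congrArg Fin.val hx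
    simp only [Fin.coe_natAdd] at this
    exact Fin.ext (by omega)

lemma WtW_GG (W : ℕ → ℝ) {i j k m n : ℕ} (π : Equiv.Perm (Fin (i + j)))
    (g1 : Fin k → Fin i) (g2 : Fin m → Fin j) (e : Fin n ≃ Fin (k + m)) :
    WtW W (fun x => GG i j π g1 g2 (e x)) = WtW W g1 * WtW W g2 := by
  unfold WtW
  have h1 : ∀ t, fiberCard (fun x => GG i j π g1 g2 (e x)) t = fiberCard (GG i j π g1 g2) t :=
    fiberCard_comp_equiv _ e
  have h2 : ∀ t, fiberCard (GG i j π g1 g2) t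
      = fiberCard (Fin.append (fun a => Fin.castAdd j (g1 a)) (fun b => Fin.natAdd i (g2 b)))
          (π.symm t) :=
    fun t => fiberCard_perm_target _ π t
  simp only [h1, h2]
  rw [Equiv.prod_comp π.symm (fun s => W (fiberCard
    (Fin.append (fun a => Fin.castAdd j (g1 a)) (fun b => Fin.natAdd i (g2 b))) s))]
  rw [Fin.prod_univ_add (f := fun s => W (fiberCard
    (Fin.append (fun a => Fin.castAdd j (g1 a)) (fun b => Fin.natAdd i (g2 b))) s))]
  congr 1
  · exact Finset.prod_congr rfl fun a _ => by rw [fiberCard_append_left]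
  · exact Finset.prod_congr rfl fun b _ => by rw [fiberCard_append_right]

lemma subtypeCongr_pos {α : Type*} {p q : α → Prop} [DecidablePred p] [DecidablePred q]
    (e : {x // p x} ≃ {x // q x}) (f : {x // ¬ p x} ≃ {x // ¬ q x}) {z : α} (hz : p z) :
    Equiv.subtypeCongr e f z = (e ⟨z, hz⟩ : {x // q x}) := by
  simp [Equiv.subtypeCongr, Equiv.sumCompl_symm_apply_of_pos hz]

lemma subtypeCongr_neg {α : Type*} {p q : α → Prop} [DecidablePred p] [DecidablePred q]
    (e : {x // p x} ≃ {x // q x}) (f : {x // ¬ p x} ≃ {x // ¬ q x}) {z : α} (hz : ¬ p z) :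
    Equiv.subtypeCongr e f z = (f ⟨z, hz⟩ : {x // ¬ q x}) := by
  simp [Equiv.subtypeCongr, Equiv.sumCompl_symm_apply_of_neg hz]

lemma card_perm_cond {n : ℕ} (S K : Finset (Fin n)) (hSK : S.card = K.card) :
    ((univ : Finset (Equiv.Perm (Fin n))).filter (fun σ => ∀ z, σ z ∈ K ↔ z ∈ S)).card
      = S.card.factorial * (n - S.card).factorial := by
  classical
  rw [← Fintype.card_subtype]
  have E : {σ : Equiv.Perm (Fin n) // ∀ z, σ z ∈ K ↔ z ∈ S}
      ≃ (({z // z ∈ S} ≃ {z // z ∈ K}) × ({z // ¬ z ∈ S} ≃ {z // ¬ z ∈ K})) :=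
    { toFun := fun σ =>
        (⟨fun z => ⟨σ.1 z.1, (σ.2 z.1).mpr z.2⟩,
          fun w => ⟨σ.1.symm w.1, by
            have h := σ.2 (σ.1.symm w.1)
            rw [Equiv.apply_symm_apply] at h
            exact h.mp w.2⟩,
          fun z => Subtype.ext (by simp),
          fun w => Subtype.ext (by simp)⟩,
         ⟨fun z => ⟨σ.1 z.1, fun hK => z.2 ((σ.2 z.1).mp hK)⟩,
          fun w => ⟨σ.1.symm w.1, fun hS => w.2 (by
            have h := σ.2 (σ.1.symm w.1)
            rw [Equiv.apply_symm_apply] at h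
            exact h.mpr hS)⟩,
          fun z => Subtype.ext (by simp),
          fun w => Subtype.ext (by simp)⟩)
      invFun := fun pr =>
        ⟨Equiv.subtypeCongr pr.1 pr.2, fun z => by
          by_cases hz : z ∈ S
          · rw [subtypeCongr_pos pr.1 pr.2 hz]
            exact iff_of_true (pr.1 ⟨z, hz⟩).2 hz
          · rw [subtypeCongr_neg pr.1 pr.2 hz]
            exact iff_of_false (pr.2 ⟨z, hz⟩).2 hz⟩
      left_inv := fun σ => Subtype.ext (Equiv.ext fun z => by
        by_cases hz : z ∈ S
        · rw [subtypeCongr_pos _ _ hz]; rfl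
        · rw [subtypeCongr_neg _ _ hz]; rfl)
      right_inv := fun pr => by
        refine Prod.ext ?_ ?_
        · exact Equiv.ext fun z => Subtype.ext (by
            show Equiv.subtypeCongr pr.1 pr.2 z.1 = ((pr.1 z : {z // z ∈ K}) : Fin n)
            rw [subtypeCongr_pos pr.1 pr.2 z.2])
        · exact Equiv.ext fun z => Subtype.ext (by
            show Equiv.subtypeCongr pr.1 pr.2 z.1 = ((pr.2 z : {z : Fin n // ¬ z ∈ K}) : Fin n)
            rw [subtypeCongr_neg pr.1 pr.2 z.2]) }
  have c1 : Fintype.card {z // z ∈ S} = S.card := Fintype.card_coe S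
  have c2 : Fintype.card {z // z ∈ K} = K.card := Fintype.card_coe K
  have c3 : Fintype.card {z : Fin n // ¬ z ∈ S} = n - S.card := by
    rw [Fintype.card_subtype_compl, Fintype.card_fin, c1]
  have c4 : Fintype.card {z : Fin n // ¬ z ∈ K} = n - K.card := by
    rw [Fintype.card_subtype_compl, Fintype.card_fin, c2]
  have e1 : {z // z ∈ S} ≃ {z // z ∈ K} := Fintype.equivOfCardEq (by rw [c1, c2, hSK])
  have e2 : {z : Fin n // ¬ z ∈ S} ≃ {z : Fin n // ¬ z ∈ K} :=
    Fintype.equivOfCardEq (by rw [c3, c4, hSK])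
  rw [Fintype.card_congr E, Fintype.card_prod, Fintype.card_equiv e1, Fintype.card_equiv e2,
    c1, c3]

lemma card_lt_filter {n k : ℕ} (hk : k ≤ n) :
    ((univ : Finset (Fin n)).filter (fun x => x.val < k)).card = k := by
  have hb := Finset.card_bij (s := (univ : Finset (Fin k)))
    (t := (univ : Finset (Fin n)).filter (fun x => x.val < k))
    (fun c _ => (⟨(c : ℕ), lt_of_lt_of_le c.isLt hk⟩ : Fin n)) ?_ ?_ ?_
  · rw [← hb, card_univ, Fintype.card_fin]
  · intro c _; simp [c.isLt]
  · intro c _ c' _ hcc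
    have hcc' : (⟨(c : ℕ), lt_of_lt_of_le c.isLt hk⟩ : Fin n) = ⟨(c' : ℕ), lt_of_lt_of_le c'.isLt hk⟩ := hcc
    exact Fin.ext (by simpa [Fin.ext_iff] using hcc')
  · intro x hx
    simp only [mem_filter, mem_univ, true_and] at hx
    exact ⟨⟨(x : ℕ), hx⟩, mem_univ _, Fin.ext rfl⟩

lemma count_cond {n i j k m : ℕ} (h : n = k + m) (g : Fin n → Fin (i + j))
    (π : Equiv.Perm (Fin (i + j))) :
    (((univ : Finset (Equiv.Perm (Fin n))).filter
        (fun σ => ∀ z, (((π.symm (g z) : Fin (i + j)) : ℕ) < i ↔ ((σ z : ℕ) < k)))).card : ℝ)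
      = if ((univ : Finset (Fin n)).filter
            (fun z => ((π.symm (g z) : Fin (i + j)) : ℕ) < i)).card = k
        then ((k.factorial * m.factorial : ℕ) : ℝ) else 0 := by
  classical
  set S := (univ : Finset (Fin n)).filter
      (fun z => ((π.symm (g z) : Fin (i + j)) : ℕ) < i) with hS
  have hK : ((univ : Finset (Fin n)).filter (fun x => x.val < k)).card = k :=
    card_lt_filter (by omega)
  have hcond : ∀ σ : Equiv.Perm (Fin n),
      (∀ z, (((π.symm (g z) : Fin (i + j)) : ℕ) < i ↔ ((σ z : ℕ) < k)))
        ↔ (∀ z, σ z ∈ ((univ : Finset (Fin n)).filter (fun x => x.val < k)) ↔ z ∈ S) := by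
    intro σ
    constructor <;> intro hh z <;> have h1 := hh z <;>
      simp only [hS, mem_filter, mem_univ, true_and] at * <;> tauto
  have hfeq : (univ : Finset (Equiv.Perm (Fin n))).filter
        (fun σ => ∀ z, (((π.symm (g z) : Fin (i + j)) : ℕ) < i ↔ ((σ z : ℕ) < k)))
      = univ.filter
        (fun σ => ∀ z, σ z ∈ ((univ : Finset (Fin n)).filter (fun x => x.val < k)) ↔ z ∈ S) :=
    Finset.filter_congr fun σ _ => hcond σ
  rw [hfeq]
  by_cases hc : S.card = k
  · rw [if_pos hc, card_perm_cond S _ (by rw [hc, hK]), hc]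
    have hnm : n - k = m := by omega
    rw [hnm]
  · rw [if_neg hc]
    norm_cast
    rw [Finset.card_eq_zero, Finset.filter_eq_empty_iff]
    intro σ _ hcondσ
    have hSK : S.card = k := by
      rw [← hK]
      apply Finset.card_bij (fun z _ => σ z)
      · intro z hz; exact (hcondσ z).mpr hz
      · intro z _ z' _ hzz; exact σ.injective hzz
      · intro x hx
        refine ⟨σ.symm x, ?_, by simp⟩
        have h2 := hcondσ (σ.symm x)
        rw [Equiv.apply_symm_apply] at h2
        exact h2.mp hx
    exact hc hSK

def castPermEquiv {n k m : ℕ} (h : n = k + m) (σ : Equiv.Perm (Fin n)) :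
    Fin n ≃ Fin (k + m) where
  toFun := fun x => Fin.cast h (σ x)
  invFun := fun w => σ.symm (Fin.cast h.symm w)
  left_inv := fun x => by
    show σ.symm (Fin.cast h.symm (Fin.cast h (σ x))) = x
    rw [show Fin.cast h.symm (Fin.cast h (σ x)) = σ x from Fin.ext rfl,
      Equiv.symm_apply_apply]
  right_inv := fun w => by
    show Fin.cast h (σ (σ.symm (Fin.cast h.symm w))) = w
    rw [Equiv.apply_symm_apply]; exact Fin.ext rfl

lemma perk (W : ℕ → ℝ) {n i j k m : ℕ} (h : n = k + m)
    (F : (Fin n → Fin (i + j)) → ℝ) :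
    ∑ π : Equiv.Perm (Fin (i + j)), ∑ g1 ∈ surjs k i, ∑ g2 ∈ surjs m j,
        ∑ σ : Equiv.Perm (Fin n),
          WtW W g1 * WtW W g2 * F (fun x => GG i j π g1 g2 (Fin.cast h (σ x)))
      = ∑ g ∈ surjs n (i + j), ∑ π : Equiv.Perm (Fin (i + j)),
          (if ((univ : Finset (Fin n)).filter
                (fun z => ((π.symm (g z) : Fin (i + j)) : ℕ) < i)).card = k
            then ((k.factorial * m.factorial : ℕ) : ℝ) else 0) * (WtW W g * F g) := by
  classical
  have stepR : ∀ g ∈ surjs n (i + j), ∀ π : Equiv.Perm (Fin (i + j)),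
      (if ((univ : Finset (Fin n)).filter
            (fun z => ((π.symm (g z) : Fin (i + j)) : ℕ) < i)).card = k
        then ((k.factorial * m.factorial : ℕ) : ℝ) else 0) * (WtW W g * F g)
      = ∑ σ : Equiv.Perm (Fin n),
          if (∀ z, (((π.symm (g z) : Fin (i + j)) : ℕ) < i ↔ ((σ z : ℕ) < k)))
          then WtW W g * F g else 0 := by
    intro g hg π
    rw [Finset.sum_ite, Finset.sum_const_zero, add_zero, Finset.sum_const, nsmul_eq_mul,
      count_cond h g π]
  have L : ∑ p ∈ ((univ : Finset (Equiv.Perm (Fin (i + j)))) ×ˢ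
        ((surjs k i) ×ˢ ((surjs m j) ×ˢ (univ : Finset (Equiv.Perm (Fin n)))))),
        WtW W p.2.1 * WtW W p.2.2.1 *
          F (fun x => GG i j p.1 p.2.1 p.2.2.1 (Fin.cast h (p.2.2.2 x)))
      = ∑ π : Equiv.Perm (Fin (i + j)), ∑ g1 ∈ surjs k i, ∑ g2 ∈ surjs m j,
          ∑ σ : Equiv.Perm (Fin n),
            WtW W g1 * WtW W g2 * F (fun x => GG i j π g1 g2 (Fin.cast h (σ x))) := by
    rw [Finset.sum_product]
    refine Finset.sum_congr rfl fun π _ => ?_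
    rw [Finset.sum_product]
    refine Finset.sum_congr rfl fun g1 _ => ?_
    rw [Finset.sum_product]
  have key : ∑ p ∈ ((univ : Finset (Equiv.Perm (Fin (i + j)))) ×ˢ
        ((surjs k i) ×ˢ ((surjs m j) ×ˢ (univ : Finset (Equiv.Perm (Fin n)))))),
        WtW W p.2.1 * WtW W p.2.2.1 *
          F (fun x => GG i j p.1 p.2.1 p.2.2.1 (Fin.cast h (p.2.2.2 x)))
      = ∑ q ∈ ((surjs n (i + j)) ×ˢ ((univ : Finset (Equiv.Perm (Fin (i + j)))) ×ˢ
            (univ : Finset (Equiv.Perm (Fin n))))).filter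
            (fun q => ∀ z, (((q.2.1.symm (q.1 z) : Fin (i + j)) : ℕ) < i
              ↔ ((q.2.2 z : ℕ) < k))),
          WtW W q.1 * F q.1 := by
    refine Finset.sum_bij (fun p _ =>
      ((fun x => GG i j p.1 p.2.1 p.2.2.1 (Fin.cast h (p.2.2.2 x))), (p.1, p.2.2.2)))
      ?_ ?_ ?_ ?_
    · rintro ⟨π, g1, g2, σ⟩ hp
      simp only [Finset.mem_product, Finset.mem_univ, true_and, and_true] at hp
      obtain ⟨hg1, hg2⟩ := hp
      rw [mem_surjs] at hg1 hg2
      simp only [Finset.mem_filter, Finset.mem_product, Finset.mem_univ, true_and, and_true]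
      constructor
      · rw [mem_surjs]
        intro t
        rcases lt_or_ge ((π.symm t : Fin (i + j)) : ℕ) i with hs | hs
        · obtain ⟨a, ha⟩ := hg1 ⟨_, hs⟩
          refine ⟨σ.symm (Fin.cast h.symm (Fin.castAdd m a)), ?_⟩
          have hcast : Fin.cast h (σ (σ.symm (Fin.cast h.symm (Fin.castAdd m a))))
              = Fin.castAdd m a := by
            rw [Equiv.apply_symm_apply]; exact Fin.ext rfl
          show GG i j π g1 g2 _ = t
          rw [hcast]
          unfold GG
          rw [Fin.append_left]
          have heq : Fin.castAdd j (g1 a) = π.symm t := by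
            apply Fin.ext
            simp [ha]
          rw [heq, Equiv.apply_symm_apply]
        · have hlt := (π.symm t).isLt
          obtain ⟨b, hb⟩ := hg2 ⟨((π.symm t : Fin (i + j)) : ℕ) - i, by omega⟩
          refine ⟨σ.symm (Fin.cast h.symm (Fin.natAdd k b)), ?_⟩
          have hcast : Fin.cast h (σ (σ.symm (Fin.cast h.symm (Fin.natAdd k b))))
              = Fin.natAdd k b := by
            rw [Equiv.apply_symm_apply]; exact Fin.ext rfl
          show GG i j π g1 g2 _ = t
          rw [hcast]
          unfold GG
          rw [Fin.append_right]
          have heq : Fin.natAdd i (g2 b) = π.symm t := by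
            apply Fin.ext
            have := congrArg Fin.val hb
            simp only [Fin.coe_natAdd] at *
            omega
          rw [heq, Equiv.apply_symm_apply]
      · intro z
        show ((π.symm (GG i j π g1 g2 (Fin.cast h (σ z))) : Fin (i + j)) : ℕ) < i ↔ _
        unfold GG
        rw [Equiv.symm_apply_apply, append_val_lt g1 g2]
        simp [Fin.coe_cast]
    · rintro ⟨π, g1, g2, σ⟩ hp ⟨π', g1', g2', σ'⟩ hp' heq
      simp only [Prod.mk.injEq] at heq
      obtain ⟨hfun, hπ, hσ⟩ := heq
      subst hπ; subst hσ
      have hGG : ∀ w : Fin (k + m), GG i j π g1 g2 w = GG i j π g1' g2' w := by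
        intro w
        have hx : Fin.cast h (σ (σ.symm (Fin.cast h.symm w))) = w := by
          rw [Equiv.apply_symm_apply]; exact Fin.ext rfl
        have h2 := congrFun hfun (σ.symm (Fin.cast h.symm w))
        rw [hx] at h2
        exact h2
      have hg1 : g1 = g1' := by
        funext a
        have h2 := hGG (Fin.castAdd m a)
        unfold GG at h2
        rw [Fin.append_left, Fin.append_left] at h2
        exact Fin.castAdd_injective _ _ (π.injective h2)
      have hg2 : g2 = g2' := by
        funext b
        have h2 := hGG (Fin.natAdd k b)
        unfold GG at h2
        rw [Fin.append_right, Fin.append_right] at h2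
        have h3 := congrArg Fin.val (π.injective h2)
        simp only [Fin.coe_natAdd] at h3
        exact Fin.ext (by omega)
      subst hg1; subst hg2; rfl
    · rintro ⟨g, π, σ⟩ hq
      simp only [Finset.mem_filter, Finset.mem_product, Finset.mem_univ, true_and,
        and_true] at hq
      obtain ⟨hg, hcond⟩ := hq
      rw [mem_surjs] at hg
      have hg1mem : ∀ a : Fin k,
          ((π.symm (g (σ.symm (Fin.cast h.symm (Fin.castAdd m a)))) : Fin (i + j)) : ℕ) < i := by
        intro a
        have hc := hcond (σ.symm (Fin.cast h.symm (Fin.castAdd m a)))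
        apply hc.mpr
        rw [Equiv.apply_symm_apply]
        show ((Fin.cast h.symm (Fin.castAdd m a) : Fin n) : ℕ) < k
        simpa using a.isLt
      have hg2mem : ∀ b : Fin m,
          ¬ ((π.symm (g (σ.symm (Fin.cast h.symm (Fin.natAdd k b)))) : Fin (i + j)) : ℕ) < i := by
        intro b hltb
        have hc := hcond (σ.symm (Fin.cast h.symm (Fin.natAdd k b)))
        have h2 := hc.mp hltb
        rw [Equiv.apply_symm_apply] at h2
        simp only [Fin.coe_cast, Fin.coe_natAdd] at h2
        omega
      refine ⟨⟨π, fun a => ⟨_, hg1mem a⟩, fun b =>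
        ⟨((π.symm (g (σ.symm (Fin.cast h.symm (Fin.natAdd k b)))) : Fin (i + j)) : ℕ) - i, by
          have h1 := hg2mem b
          have h2 := (π.symm (g (σ.symm (Fin.cast h.symm (Fin.natAdd k b))))).isLt
          omega⟩, σ⟩, ?_, ?_⟩
      · simp only [Finset.mem_product, Finset.mem_univ, true_and, and_true]
        constructor
        · rw [mem_surjs]
          intro t
          obtain ⟨z, hz⟩ := hg (π (Fin.castAdd j t))
          have hzk : ((σ z : Fin n) : ℕ) < k := by
            apply (hcond z).mp
            rw [hz, Equiv.symm_apply_apply]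
            simpa using t.isLt
          refine ⟨⟨(σ z : ℕ), hzk⟩, ?_⟩
          apply Fin.ext
          show ((π.symm (g (σ.symm (Fin.cast h.symm
              (Fin.castAdd m ⟨((σ z : Fin n) : ℕ), hzk⟩)))) : Fin (i + j)) : ℕ) = (t : ℕ)
          have hx : σ.symm (Fin.cast h.symm (Fin.castAdd m ⟨((σ z : Fin n) : ℕ), hzk⟩)) = z := by
            rw [show Fin.cast h.symm (Fin.castAdd m ⟨((σ z : Fin n) : ℕ), hzk⟩) = σ z from
              Fin.ext rfl, Equiv.symm_apply_apply]
          rw [hx, hz, Equiv.symm_apply_apply]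
          simp
        · rw [mem_surjs]
          intro t
          obtain ⟨z, hz⟩ := hg (π (Fin.natAdd i t))
          have hzk : ¬ ((σ z : Fin n) : ℕ) < k := by
            intro hltz
            have h2 := (hcond z).mpr hltz
            rw [hz, Equiv.symm_apply_apply] at h2
            simp only [Fin.coe_natAdd] at h2
            omega
          have hzlt := (σ z).isLt
          refine ⟨⟨((σ z : Fin n) : ℕ) - k, by omega⟩, ?_⟩
          apply Fin.ext
          show ((π.symm (g (σ.symm (Fin.cast h.symm
              (Fin.natAdd k ⟨((σ z : Fin n) : ℕ) - k, by omega⟩)))) : Fin (i + j)) : ℕ) - i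
            = (t : ℕ)
          have hx : σ.symm (Fin.cast h.symm
              (Fin.natAdd k ⟨((σ z : Fin n) : ℕ) - k, by omega⟩)) = z := by
            rw [show Fin.cast h.symm (Fin.natAdd k ⟨((σ z : Fin n) : ℕ) - k, by omega⟩) = σ z from
              Fin.ext (by simp only [Fin.coe_cast, Fin.coe_natAdd]; omega),
              Equiv.symm_apply_apply]
          rw [hx, hz, Equiv.symm_apply_apply]
          simp only [Fin.coe_natAdd]
          omega
      · refine Prod.ext ?_ rfl
        funext x
        show GG i j π _ _ (Fin.cast h (σ x)) = g x
        rcases fin_split (Fin.cast h (σ x)) with ⟨a, ha⟩ | ⟨b, hb⟩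
        · rw [ha]
          unfold GG
          rw [Fin.append_left]
          have hx : σ.symm (Fin.cast h.symm (Fin.castAdd m a)) = x := by
            rw [show Fin.cast h.symm (Fin.castAdd m a) = σ x from ?_, Equiv.symm_apply_apply]
            apply Fin.ext
            have := congrArg Fin.val ha
            simpa using this.symm
          rw [← Equiv.apply_symm_apply π (g x)]
          congr 1
          apply Fin.ext
          show ((π.symm (g (σ.symm (Fin.cast h.symm (Fin.castAdd m a)))) : Fin (i + j)) : ℕ)
            = ((π.symm (g x) : Fin (i + j)) : ℕ)
          rw [hx]
        · rw [hb]
          unfold GG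
          rw [Fin.append_right]
          have hx : σ.symm (Fin.cast h.symm (Fin.natAdd k b)) = x := by
            rw [show Fin.cast h.symm (Fin.natAdd k b) = σ x from ?_, Equiv.symm_apply_apply]
            apply Fin.ext
            have := congrArg Fin.val hb
            simpa using this.symm
          rw [← Equiv.apply_symm_apply π (g x)]
          congr 1
          apply Fin.ext
          show i + (((π.symm (g (σ.symm (Fin.cast h.symm (Fin.natAdd k b)))) : Fin (i + j)) : ℕ) - i)
            = ((π.symm (g x) : Fin (i + j)) : ℕ)
          have h1 := hg2mem b
          rw [hx] at h1 ⊢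
          have h2 := (π.symm (g x)).isLt
          omega
    · rintro ⟨π, g1, g2, σ⟩ hp
      show WtW W g1 * WtW W g2 * F (fun x => GG i j π g1 g2 (Fin.cast h (σ x)))
        = WtW W (fun x => GG i j π g1 g2 (Fin.cast h (σ x)))
          * F (fun x => GG i j π g1 g2 (Fin.cast h (σ x)))
      congr 1
      exact (WtW_GG W π g1 g2 (castPermEquiv h σ)).symm
  calc
    ∑ π : Equiv.Perm (Fin (i + j)), ∑ g1 ∈ surjs k i, ∑ g2 ∈ surjs m j,
        ∑ σ : Equiv.Perm (Fin n),
          WtW W g1 * WtW W g2 * F (fun x => GG i j π g1 g2 (Fin.cast h (σ x)))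
      = ∑ q ∈ ((surjs n (i + j)) ×ˢ ((univ : Finset (Equiv.Perm (Fin (i + j)))) ×ˢ
            (univ : Finset (Equiv.Perm (Fin n))))).filter
            (fun q => ∀ z, (((q.2.1.symm (q.1 z) : Fin (i + j)) : ℕ) < i
              ↔ ((q.2.2 z : ℕ) < k))),
          WtW W q.1 * F q.1 := by rw [← L, key]
    _ = ∑ g ∈ surjs n (i + j), ∑ π : Equiv.Perm (Fin (i + j)),
          (if ((univ : Finset (Fin n)).filter
                (fun z => ((π.symm (g z) : Fin (i + j)) : ℕ) < i)).card = k
            then ((k.factorial * m.factorial : ℕ) : ℝ) else 0) * (WtW W g * F g) := by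
      rw [Finset.sum_filter, Finset.sum_product]
      refine Finset.sum_congr rfl fun g hg => ?_
      rw [Finset.sum_product]
      refine Finset.sum_congr rfl fun π _ => ?_
      exact (stepR g hg π).symm

lemma GG_eval {X : Type*} {i j k m : ℕ} (y : Fin (i + j) → X) (π : Equiv.Perm (Fin (i + j)))
    (g1 : Fin k → Fin i) (g2 : Fin m → Fin j) (w : Fin (k + m)) :
    Fin.append (fun a => y (π (Fin.castAdd j (g1 a)))) (fun b => y (π (Fin.natAdd i (g2 b)))) w
      = y (GG i j π g1 g2 w) := by
  rcases fin_split w with ⟨a, rfl⟩ | ⟨b, rfl⟩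
  · rw [Fin.append_left]; unfold GG; rw [Fin.append_left]
  · rw [Fin.append_right]; unfold GG; rw [Fin.append_right]

lemma sum_div_helper {α : Type*} (s : Finset α) (c A : α → ℝ) (d : ℝ) :
    ∑ x ∈ s, c x * (A x / d) = (∑ x ∈ s, c x * A x) / d := by
  rw [Finset.sum_div]; exact Finset.sum_congr rfl fun x _ => (mul_div_assoc _ _ _).symm

lemma unfold_opTens {X : Type*} [Fintype X] [DecidableEq X] (W : ℕ → ℝ) {n i j k m : ℕ}
    (h : n = k + m) (f : (Fin n → X) → ℝ) (y : Fin (i + j) → X) :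
    symmFun (i + j) (opTens (TopW W k i) (TopW W m j) (castFun h f)) y
      = (∑ π : Equiv.Perm (Fin (i + j)), ∑ g1 ∈ surjs k i, ∑ g2 ∈ surjs m j,
          WtW W g1 * WtW W g2 * f (y ∘ fun x => GG i j π g1 g2 (Fin.cast h x)))
        / (((i + j).factorial : ℝ) * ((i.factorial : ℝ) * (j.factorial : ℝ))) := by
  simp only [symmFun, opTens, TopW, castFun, Function.comp]
  have harg : ∀ (π : Equiv.Perm (Fin (i + j))) (g1 : Fin k → Fin i) (g2 : Fin m → Fin j),
      (f fun x => Fin.append ((fun a => y (π (Fin.castAdd j a))) ∘ g1)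
          ((fun b => y (π (Fin.natAdd i b))) ∘ g2) (Fin.cast h x))
        = f (y ∘ fun x => GG i j π g1 g2 (Fin.cast h x)) := by
    intro π g1 g2
    congr 1
    funext x
    show Fin.append (fun a => y (π (Fin.castAdd j (g1 a))))
        (fun b => y (π (Fin.natAdd i (g2 b)))) (Fin.cast h x) = _
    rw [GG_eval]
    rfl
  simp only [harg]
  have hπ : ∀ π : Equiv.Perm (Fin (i + j)),
      (∑ g1 ∈ surjs k i, WtW W g1 *
          ((∑ g2 ∈ surjs m j, WtW W g2 * f (y ∘ fun x => GG i j π g1 g2 (Fin.cast h x)))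
            / (j.factorial : ℝ)))
        / (i.factorial : ℝ)
      = (∑ g1 ∈ surjs k i, ∑ g2 ∈ surjs m j,
          WtW W g1 * WtW W g2 * f (y ∘ fun x => GG i j π g1 g2 (Fin.cast h x)))
        / ((i.factorial : ℝ) * (j.factorial : ℝ)) := by
    intro π
    rw [sum_div_helper, div_div, mul_comm (j.factorial : ℝ) (i.factorial : ℝ)]
    congr 1
    refine Finset.sum_congr rfl fun g1 _ => ?_
    rw [Finset.mul_sum]
    exact Finset.sum_congr rfl fun g2 _ => (mul_assoc _ _ _).symm
  simp only [hπ]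
  rw [← Finset.sum_div, div_div,
    mul_comm ((i.factorial : ℝ) * (j.factorial : ℝ)) (((i + j).factorial : ℝ))]

lemma Scard_mem_Icc {n i j : ℕ} (g : Fin n → Fin (i + j)) (hg : Function.Surjective g)
    (π : Equiv.Perm (Fin (i + j))) :
    ((univ : Finset (Fin n)).filter
        (fun z => ((π.symm (g z) : Fin (i + j)) : ℕ) < i)).card ∈ Finset.Icc i (n - j) := by
  classical
  have h1 : i ≤ ((univ : Finset (Fin n)).filter
      (fun z => ((π.symm (g z) : Fin (i + j)) : ℕ) < i)).card := by
    have hr : (Finset.range i).card ≤ ((univ : Finset (Fin n)).filter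
        (fun z => ((π.symm (g z) : Fin (i + j)) : ℕ) < i)).card := by
      apply Finset.card_le_card_of_surjOn (fun z => ((π.symm (g z) : Fin (i + j)) : ℕ))
      intro c hc
      simp only [coe_range, Set.mem_Iio] at hc
      obtain ⟨z, hz⟩ := hg (π ⟨c, by omega⟩)
      refine ⟨z, ?_, ?_⟩
      · simp only [coe_filter, Set.mem_setOf_eq, mem_univ, true_and, hz,
          Equiv.symm_apply_apply]
        exact hc
      · show ((π.symm (g z) : Fin (i + j)) : ℕ) = c
        rw [hz, Equiv.symm_apply_apply]
    simpa using hr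
  have h2 : j ≤ ((univ : Finset (Fin n)).filter
      (fun z => ¬ ((π.symm (g z) : Fin (i + j)) : ℕ) < i)).card := by
    have hr : (Finset.range j).card ≤ ((univ : Finset (Fin n)).filter
        (fun z => ¬ ((π.symm (g z) : Fin (i + j)) : ℕ) < i)).card := by
      apply Finset.card_le_card_of_surjOn (fun z => ((π.symm (g z) : Fin (i + j)) : ℕ) - i)
      intro c hc
      simp only [coe_range, Set.mem_Iio] at hc
      obtain ⟨z, hz⟩ := hg (π (Fin.natAdd i ⟨c, hc⟩))
      refine ⟨z, ?_, ?_⟩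
      · simp only [coe_filter, Set.mem_setOf_eq, mem_univ, true_and, hz,
          Equiv.symm_apply_apply, Fin.coe_natAdd]
        omega
      · show ((π.symm (g z) : Fin (i + j)) : ℕ) - i = c
        rw [hz, Equiv.symm_apply_apply]
        simp [Fin.coe_natAdd]
    simpa using hr
  have h3 := Finset.card_filter_add_card_filter_not
      (s := (univ : Finset (Fin n)))
      (p := fun z => ((π.symm (g z) : Fin (i + j)) : ℕ) < i)
  rw [Finset.card_univ, Fintype.card_fin] at h3
  rw [Finset.mem_Icc]
  omega

lemma perk' {X : Type*} [Fintype X] [DecidableEq X] (W : ℕ → ℝ) {n i j k : ℕ}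
    (hik : i ≤ k) (hkn : k ≤ n - j) (hjn : j ≤ n)
    (f : (Fin n → X) → ℝ) (hf : IsSymmFun f) (y : Fin (i + j) → X) (h : n = k + (n - k)) :
    (n.choose k : ℝ) * symmFun (i + j) (opTens (TopW W k i) (TopW W (n - k) j) (castFun h f)) y
      = (∑ g ∈ surjs n (i + j), ∑ π : Equiv.Perm (Fin (i + j)),
          (if ((univ : Finset (Fin n)).filter
                (fun z => ((π.symm (g z) : Fin (i + j)) : ℕ) < i)).card = k
            then (1 : ℝ) else 0) * (WtW W g * f (y ∘ g)))
        / (((i + j).factorial : ℝ) * ((i.factorial : ℝ) * (j.factorial : ℝ))) := by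
  classical
  have hfacne : ∀ N : ℕ, ((N.factorial : ℝ)) ≠ 0 :=
    fun N => Nat.cast_ne_zero.mpr (Nat.factorial_ne_zero N)
  rw [unfold_opTens W h f y]
  have hstep : ∀ (π : Equiv.Perm (Fin (i + j))) (g1 : Fin k → Fin i)
      (g2 : Fin (n - k) → Fin j),
      WtW W g1 * WtW W g2 * f (y ∘ fun x => GG i j π g1 g2 (Fin.cast h x))
        = (∑ σ : Equiv.Perm (Fin n),
            WtW W g1 * WtW W g2 * f (y ∘ fun x => GG i j π g1 g2 (Fin.cast h (σ x))))
          / (n.factorial : ℝ) := by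
    intro π g1 g2
    have he : ∀ σ : Equiv.Perm (Fin n),
        WtW W g1 * WtW W g2 * f (y ∘ fun x => GG i j π g1 g2 (Fin.cast h (σ x)))
          = WtW W g1 * WtW W g2 * f (y ∘ fun x => GG i j π g1 g2 (Fin.cast h x)) := fun σ =>
      congrArg (WtW W g1 * WtW W g2 * ·)
        (hf σ (y ∘ fun x => GG i j π g1 g2 (Fin.cast h x)))
    rw [Finset.sum_congr rfl fun σ _ => he σ, Finset.sum_const, Finset.card_univ,
      Fintype.card_perm, Fintype.card_fin, nsmul_eq_mul,
      mul_div_cancel_left₀ _ (hfacne n)]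
  simp only [hstep, ← Finset.sum_div]
  have hperk := perk W h (fun g : Fin n → Fin (i + j) => f (y ∘ g))
  rw [hperk]
  have hkn : k ≤ n := by omega
  rw [div_div]
  rw [show (n.choose k : ℝ) * ((∑ g ∈ surjs n (i + j), ∑ π : Equiv.Perm (Fin (i + j)),
      (if ((univ : Finset (Fin n)).filter
            (fun z => ((π.symm (g z) : Fin (i + j)) : ℕ) < i)).card = k
        then ((k.factorial * (n - k).factorial : ℕ) : ℝ) else 0) * (WtW W g * f (y ∘ g)))
      / ((n.factorial : ℝ) * (((i + j).factorial : ℝ)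
          * ((i.factorial : ℝ) * (j.factorial : ℝ)))))
    = ((n.choose k : ℝ) * (∑ g ∈ surjs n (i + j), ∑ π : Equiv.Perm (Fin (i + j)),
      (if ((univ : Finset (Fin n)).filter
            (fun z => ((π.symm (g z) : Fin (i + j)) : ℕ) < i)).card = k
        then ((k.factorial * (n - k).factorial : ℕ) : ℝ) else 0) * (WtW W g * f (y ∘ g)))
      / (n.factorial : ℝ))
      / (((i + j).factorial : ℝ) * ((i.factorial : ℝ) * (j.factorial : ℝ))) from by
    rw [div_div, mul_div_assoc]]
  congr 1
  rw [Finset.mul_sum, Finset.sum_div]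
  refine Finset.sum_congr rfl fun g _ => ?_
  rw [Finset.mul_sum, Finset.sum_div]
  refine Finset.sum_congr rfl fun π _ => ?_
  by_cases hc : ((univ : Finset (Fin n)).filter
      (fun z => ((π.symm (g z) : Fin (i + j)) : ℕ) < i)).card = k
  · rw [if_pos hc, if_pos hc, one_mul, ← mul_assoc]
    have hch : (n.choose k : ℝ) * ((k.factorial * (n - k).factorial : ℕ) : ℝ)
        = (n.factorial : ℝ) := by
      rw [← Nat.cast_mul]
      congr 1
      rw [← Nat.choose_mul_factorial_mul_factorial hkn]
      ring
    rw [hch]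
    exact mul_div_cancel_left₀ _ (hfacne n)
  · rw [if_neg hc, if_neg hc]
    simp

lemma master {X : Type*} [Fintype X] [DecidableEq X] (W : ℕ → ℝ) {n i j : ℕ}
    (hi : i ≤ n) (hj : j ≤ n - i) (f : (Fin n → X) → ℝ) (hf : IsSymmFun f)
    (y : Fin (i + j) → X) :
    ((i + j).choose i : ℝ) * TopW W n (i + j) f y
      = ∑ k ∈ (Finset.Icc i (n - j)).attach,
          (n.choose k.1 : ℝ) *
            symmFun (i + j)
              (opTens (TopW W k.1 i) (TopW W (n - k.1) j)
                (castFun (by have := (Finset.mem_Icc.mp k.2).2; omega) f)) y := by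
  classical
  have hfacne : ∀ N : ℕ, ((N.factorial : ℝ)) ≠ 0 :=
    fun N => Nat.cast_ne_zero.mpr (Nat.factorial_ne_zero N)
  have hjn : j ≤ n := by omega
  have hstep : ∀ kk ∈ (Finset.Icc i (n - j)).attach,
      (n.choose kk.1 : ℝ) * symmFun (i + j)
          (opTens (TopW W kk.1 i) (TopW W (n - kk.1) j)
            (castFun (by have := Finset.mem_Icc.mp kk.2; omega) f)) y
        = (∑ g ∈ surjs n (i + j), ∑ π : Equiv.Perm (Fin (i + j)),
            (if ((univ : Finset (Fin n)).filter
                  (fun z => ((π.symm (g z) : Fin (i + j)) : ℕ) < i)).card = kk.1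
              then (1 : ℝ) else 0) * (WtW W g * f (y ∘ g)))
          / (((i + j).factorial : ℝ) * ((i.factorial : ℝ) * (j.factorial : ℝ))) := by
    intro kk hkk
    have hm := Finset.mem_Icc.mp kk.2
    exact perk' W hm.1 hm.2 hjn f hf y (by omega)
  rw [Finset.sum_congr rfl hstep, ← Finset.sum_div, Finset.sum_comm,
    Finset.sum_congr rfl fun g _ => Finset.sum_comm]
  have hinner : ∀ g ∈ surjs n (i + j), ∀ π : Equiv.Perm (Fin (i + j)),
      (∑ kk ∈ (Finset.Icc i (n - j)).attach,
        (if ((univ : Finset (Fin n)).filter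
              (fun z => ((π.symm (g z) : Fin (i + j)) : ℕ) < i)).card = kk.1
          then (1 : ℝ) else 0) * (WtW W g * f (y ∘ g)))
        = WtW W g * f (y ∘ g) := by
    intro g hg π
    rw [Finset.sum_attach (Finset.Icc i (n - j)) (fun kk =>
      (if ((univ : Finset (Fin n)).filter
            (fun z => ((π.symm (g z) : Fin (i + j)) : ℕ) < i)).card = kk
        then (1 : ℝ) else 0) * (WtW W g * f (y ∘ g)))]
    simp only [ite_mul, one_mul, zero_mul]
    rw [Finset.sum_ite_eq (Finset.Icc i (n - j)) _ (fun _ => WtW W g * f (y ∘ g)),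
      if_pos (Scard_mem_Icc g (mem_surjs.mp hg) π)]
  rw [Finset.sum_congr rfl fun g hg => Finset.sum_congr rfl fun π _ => hinner g hg π]
  rw [Finset.sum_congr rfl fun (g : Fin n → Fin (i + j)) (_ : g ∈ surjs n (i + j)) =>
    (by rw [Finset.sum_const, Finset.card_univ, Fintype.card_perm, Fintype.card_fin,
      nsmul_eq_mul] :
      (∑ _π : Equiv.Perm (Fin (i + j)), WtW W g * f (y ∘ g))
        = (((i + j).factorial : ℝ)) * (WtW W g * f (y ∘ g)))]
  rw [← Finset.mul_sum]
  unfold TopW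
  have hCC : ((i + j).choose i : ℝ) * ((i.factorial : ℝ) * (j.factorial : ℝ))
      = ((i + j).factorial : ℝ) := by
    have hnat : (i + j).choose i * i.factorial * j.factorial = (i + j).factorial := by
      have h2 := Nat.choose_mul_factorial_mul_factorial (Nat.le_add_right i j)
      simpa [Nat.add_sub_cancel_left] using h2
    push_cast [← hnat]
    ring
  rw [mul_div_mul_left _ _ (hfacne (i + j)), ← mul_div_assoc,
    div_eq_div_iff (hfacne (i + j)) (mul_ne_zero (hfacne i) (hfacne j)), ← hCC]
  ring

lemma sum_fiberCard {n k : ℕ} (g : Fin n → Fin k) : ∑ m : Fin k, fiberCard g m = n := by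
  have hcard := Finset.card_eq_sum_card_fiberwise (s := (univ : Finset (Fin n)))
    (t := (univ : Finset (Fin k))) (f := g) (fun x _ => mem_univ _)
  unfold fiberCard
  rw [← hcard, card_univ, Fintype.card_fin]

lemma sop_eq_Top {X : Type*} [Fintype X] [DecidableEq X] (n k : ℕ) :
    (sop n k : ((Fin n → X) → ℝ) → ((Fin k → X) → ℝ))
      = TopW (fun c => (-1 : ℝ) ^ (c - 1) * ((c - 1).factorial : ℝ)) n k := by
  funext f y
  unfold sop cop TopW
  rw [← mul_div_assoc]
  congr 1
  rw [Finset.mul_sum]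
  refine Finset.sum_congr rfl fun g hg => ?_
  suffices hW : WtW (fun c => (-1 : ℝ) ^ (c - 1) * ((c - 1).factorial : ℝ)) g
      = (-1 : ℝ) ^ (n - k) * ∏ m : Fin k, ((fiberCard g m - 1).factorial : ℝ) by
    rw [hW]; ring
  unfold WtW
  rw [Finset.prod_mul_distrib]
  congr 1
  rw [Finset.prod_pow_eq_pow_sum]
  congr 1
  have hsum := sum_fiberCard g
  have hpos : ∀ m2 : Fin k, 1 ≤ fiberCard g m2 := by
    intro m2
    obtain ⟨x, hx⟩ := (mem_surjs.mp hg) m2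
    exact Finset.card_pos.mpr ⟨x, by simp [fiberCard, hx]⟩
  have hh : ∑ m2 : Fin k, (fiberCard g m2 - 1) + ∑ _m2 : Fin k, 1
      = ∑ m2 : Fin k, fiberCard g m2 := by
    rw [← Finset.sum_add_distrib]
    exact Finset.sum_congr rfl fun m2 _ => by have := hpos m2; omega
  simp only [Finset.sum_const, card_univ, Fintype.card_fin, smul_eq_mul, mul_one] at hh
  omega

lemma Sop_eq_Top {X : Type*} [Fintype X] [DecidableEq X] (n k : ℕ) :
    (Sop n k : ((Fin n → X) → ℝ) → ((Fin k → X) → ℝ)) = TopW (fun _ => (1 : ℝ)) n k := by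
  funext f y
  unfold Sop TopW WtW
  simp

end AuxConv

/-- convolution identity for the Stirling operators: for `i ≤ n`,
`j ≤ n − i`, `C(i+j,i)·s(n,i+j) = Σ_{k=i}^{n−j} C(n,k)·Sym_{i+j}(s(k,i) ⊗ s(n−k,j))`
on symmetric functions on `X^n`, and the same identity with `s` replaced by `S`. -/
theorem stirling_convolution
    {X : Type*} [Fintype X] [DecidableEq X] {n i j : ℕ} (hi : i ≤ n) (hj : j ≤ n - i)
    (f : (Fin n → X) → ℝ) (hf : IsSymmFun f) :
    (∀ y : Fin (i + j) → X,
        (((i + j).choose i : ℝ)) * sop n (i + j) f y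
          = ∑ k ∈ (Finset.Icc i (n - j)).attach,
              (n.choose k.1 : ℝ) *
                symmFun (i + j)
                  (opTens (sop k.1 i) (sop (n - k.1) j)
                    (castFun (by have := Finset.mem_Icc.mp k.2; omega) f)) y)
    ∧ (∀ y : Fin (i + j) → X,
        (((i + j).choose i : ℝ)) * Sop n (i + j) f y
          = ∑ k ∈ (Finset.Icc i (n - j)).attach,
              (n.choose k.1 : ℝ) *
                symmFun (i + j)
                  (opTens (Sop k.1 i) (Sop (n - k.1) j)
                    (castFun (by have := Finset.mem_Icc.mp k.2; omega) f)) y) := by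
  constructor
  · intro y
    simp only [sop_eq_Top]
    exact master _ hi hj f hf y
  · intro y
    simp only [Sop_eq_Top]
    exact master _ hi hj f hf y
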